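/- Let B be an admissible Banach sequence space with shift constant N, let s ∈ B and λ ∈ (0,1). Then the sequence s² defined by s²ₙ = Σ_{m≥1} λᵐ s_{n+m} belongs to B and satisfies ‖s²‖_B ≤ (Nλ/(1−λ))‖s‖_B. -/

import Mathlib

/-- A Banach sequence space: a linear subspace of the real sequences indexed by `ℤ`,
with a norm that is monotone with respect to pointwise absolute value, and complete. -/
structure BanachSeqSpace where
  mem : (ℤ → ℝ) → Prop
  bnorm : (ℤ → ℝ) → ℝ
  zero_mem : mem 0
  add_mem : ∀ {s t : ℤ → ℝ}, mem s → mem t → mem (s + t)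
  smul_mem : ∀ (c : ℝ) {s : ℤ → ℝ}, mem s → mem (c • s)
  bnorm_nonneg : ∀ s : ℤ → ℝ, 0 ≤ bnorm s
  bnorm_eq_zero : ∀ {s : ℤ → ℝ}, mem s → (bnorm s = 0 ↔ s = 0)
  bnorm_add_le : ∀ {s t : ℤ → ℝ}, mem s → mem t → bnorm (s + t) ≤ bnorm s + bnorm t
  bnorm_smul : ∀ (c : ℝ) (s : ℤ → ℝ), bnorm (c • s) = |c| * bnorm s
  mono_mem : ∀ {s t : ℤ → ℝ}, mem t → (∀ n, |s n| ≤ |t n|) → mem s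
  mono_norm : ∀ {s t : ℤ → ℝ}, mem t → (∀ n, |s n| ≤ |t n|) → bnorm s ≤ bnorm t
  complete : ∀ u : ℕ → ℤ → ℝ, (∀ k, mem (u k)) →
    (∀ ε : ℝ, 0 < ε → ∃ K : ℕ, ∀ k l, K ≤ k → K ≤ l → bnorm (u k - u l) < ε) →
    ∃ s : ℤ → ℝ, mem s ∧ ∀ ε : ℝ, 0 < ε → ∃ K : ℕ, ∀ k, K ≤ k → bnorm (u k - s) < ε

/-- An admissible Banach sequence space: contains the characteristic functions of
singletons with positive norm, and is invariant under shifts with a uniform bound `N`. -/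
structure AdmissibleSeqSpace extends BanachSeqSpace where
  N : ℝ
  N_pos : 0 < N
  indicator_mem : ∀ n : ℤ, mem (fun k => if k = n then (1 : ℝ) else 0)
  indicator_pos : ∀ n : ℤ, 0 < bnorm (fun k => if k = n then (1 : ℝ) else 0)
  shift_mem : ∀ {s : ℤ → ℝ}, mem s → ∀ m : ℤ, mem (fun n => s (n + m))
  shift_norm : ∀ {s : ℤ → ℝ}, mem s → ∀ m : ℤ, bnorm (fun n => s (n + m)) ≤ N * bnorm s

/-- auxiliary sequence -/
def gAux (s : ℤ → ℝ) (lam : ℝ) : ℤ → ℕ → ℝ :=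
  fun n m => lam ^ (m + 1) * s (n + (m + 1))

/-- For `s ∈ B` and `λ ∈ (0,1)`, the sequence `s²ₙ = Σ_{m ≥ 1} λ^m s_{n+m}` belongs to `B`
and `‖s²‖_B ≤ (Nλ/(1-λ)) ‖s‖_B`. -/
theorem stmt3 (B : AdmissibleSeqSpace) (s : ℤ → ℝ) (hs : B.mem s)
    (lam : ℝ) (h0 : 0 < lam) (h1 : lam < 1) :
    B.mem (fun n => ∑' m : ℕ, lam ^ (m + 1) * s (n + (m + 1))) ∧
    B.bnorm (fun n => ∑' m : ℕ, lam ^ (m + 1) * s (n + (m + 1))) ≤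
      (B.N * lam / (1 - lam)) * B.bnorm s := by
  classical
  show B.mem (fun n => ∑' m : ℕ, gAux s lam n m) ∧
    B.bnorm (fun n => ∑' m : ℕ, gAux s lam n m) ≤ (B.N * lam / (1 - lam)) * B.bnorm s
  set c : ℝ := B.bnorm (fun k => if k = (0 : ℤ) then (1 : ℝ) else 0) with hcdef
  have hc : 0 < c := B.indicator_pos 0
  -- pointwise bound for members
  have key : ∀ t : ℤ → ℝ, B.mem t → ∀ n : ℤ, c * |t n| ≤ B.N * B.bnorm t := by
    intro t ht n
    have h1' : |t n| * B.bnorm (fun k => if k = n then (1 : ℝ) else 0) ≤ B.bnorm t := by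
      have hmono : B.bnorm (t n • (fun k => if k = n then (1 : ℝ) else 0)) ≤ B.bnorm t := by
        apply B.mono_norm ht
        intro k
        by_cases hk : k = n
        · subst hk; simp [abs_mul]
        · simp [hk, abs_nonneg]
      rwa [B.bnorm_smul] at hmono
    have h2' : c ≤ B.N * B.bnorm (fun k => if k = n then (1 : ℝ) else 0) := by
      have h := B.shift_norm (B.indicator_mem n) n
      have he : (fun k : ℤ => (fun j : ℤ => if j = n then (1 : ℝ) else 0) (k + n)) =
          (fun k : ℤ => if k = (0 : ℤ) then (1 : ℝ) else 0) := by
        funext k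
        simp [add_eq_right]
      rw [he] at h
      exact h
    have habs : (0:ℝ) ≤ |t n| := abs_nonneg _
    nlinarith [mul_le_mul_of_nonneg_left h1' B.N_pos.le,
      mul_le_mul_of_nonneg_right h2' habs]
  have hbd : ∀ k : ℤ, |s k| ≤ B.N * B.bnorm s / c := by
    intro k
    rw [le_div_iff₀ hc]
    have := key s hs k
    linarith
  -- geometric sum
  have hT : HasSum (fun m : ℕ => lam ^ (m + 1)) (lam * (1 - lam)⁻¹) := by
    have h := (hasSum_geometric_of_lt_one h0.le h1).mul_left lam
    have he : (fun m : ℕ => lam ^ (m + 1)) = fun m : ℕ => lam * lam ^ m := by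
      funext m; ring
    rw [he]
    exact h
  have Cst_nonneg : (0:ℝ) ≤ B.N * B.bnorm s := mul_nonneg B.N_pos.le (B.bnorm_nonneg s)
  -- pointwise summability
  have hsum : ∀ n : ℤ, HasSum (gAux s lam n) (∑' m : ℕ, gAux s lam n m) := by
    intro n
    apply Summable.hasSum
    apply Summable.of_norm_bounded (g := fun m : ℕ => lam ^ (m + 1) * (B.N * B.bnorm s / c))
      (hT.summable.mul_right _)
    intro m
    rw [Real.norm_eq_abs, gAux, abs_mul, abs_of_pos (pow_pos h0 _)]
    exact mul_le_mul_of_nonneg_left (hbd _) (pow_pos h0 _).le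
  -- finite sums are in B with the right bound
  have hFin : ∀ F : Finset ℕ, B.mem (fun n => ∑ m ∈ F, gAux s lam n m) ∧
      B.bnorm (fun n => ∑ m ∈ F, gAux s lam n m) ≤
        (B.N * B.bnorm s) * ∑ m ∈ F, lam ^ (m + 1) := by
    intro F
    induction F using Finset.induction_on with
    | empty =>
      have hz : (fun n : ℤ => ∑ m ∈ (∅ : Finset ℕ), gAux s lam n m) = (0 : ℤ → ℝ) := by
        funext n; simp
      rw [hz]
      refine ⟨B.zero_mem, ?_⟩
      rw [(B.bnorm_eq_zero B.zero_mem).mpr rfl]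
      simp
    | @insert a F ha IH =>
      have hins : (fun n : ℤ => ∑ m ∈ insert a F, gAux s lam n m) =
          (lam ^ (a + 1)) • (fun n : ℤ => s (n + (a + 1))) +
            (fun n : ℤ => ∑ m ∈ F, gAux s lam n m) := by
        funext n
        simp [Finset.sum_insert ha, gAux]
      have hshift : B.mem (fun n : ℤ => s (n + (a + 1))) := by
        exact B.shift_mem hs _
      have hmem1 : B.mem ((lam ^ (a + 1)) • (fun n : ℤ => s (n + (a + 1)))) :=
        B.smul_mem _ hshift
      constructor
      · rw [hins]
        exact B.add_mem hmem1 IH.1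
      · rw [hins, Finset.sum_insert ha]
        have hb1 : B.bnorm ((lam ^ (a + 1)) • (fun n : ℤ => s (n + (a + 1)))) ≤
            lam ^ (a + 1) * (B.N * B.bnorm s) := by
          rw [B.bnorm_smul, abs_of_pos (pow_pos h0 _)]
          exact mul_le_mul_of_nonneg_left (B.shift_norm hs _) (pow_pos h0 _).le
        have hadd := B.bnorm_add_le hmem1 IH.1
        have := IH.2
        nlinarith
  -- membership of difference, norm of negation
  have hsubmem : ∀ {p q : ℤ → ℝ}, B.mem p → B.mem q → B.mem (p - q) := by
    intro p q hp hq
    have h := B.add_mem hp (B.smul_mem (-1) hq)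
    have he : p + (-1 : ℝ) • q = p - q := by
      funext n
      simp [Pi.add_apply, Pi.smul_apply, Pi.sub_apply]
      ring
    rwa [he] at h
  have hneg : ∀ p : ℤ → ℝ, B.bnorm (-p) = B.bnorm p := by
    intro p
    have h := B.bnorm_smul (-1) p
    simpa using h
  -- the partial sums and the Cauchy estimate
  have hdiff : ∀ k l : ℕ, l ≤ k →
      (fun n : ℤ => ∑ m ∈ Finset.range k, gAux s lam n m) -
        (fun n : ℤ => ∑ m ∈ Finset.range l, gAux s lam n m) =
      fun n : ℤ => ∑ m ∈ Finset.Ico l k, gAux s lam n m := by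
    intro k l h
    funext n
    simp [Pi.sub_apply, Finset.sum_Ico_eq_sub _ h]
  have haCauchy : CauchySeq (fun K : ℕ => ∑ m ∈ Finset.range K, lam ^ (m + 1)) :=
    hT.tendsto_sum_nat.cauchySeq
  have hCauchy : ∀ ε : ℝ, 0 < ε → ∃ K : ℕ, ∀ k l, K ≤ k → K ≤ l →
      B.bnorm ((fun n : ℤ => ∑ m ∈ Finset.range k, gAux s lam n m) -
        (fun n : ℤ => ∑ m ∈ Finset.range l, gAux s lam n m)) < ε := by
    intro ε hε
    have hCst1 : (0:ℝ) < B.N * B.bnorm s + 1 := by linarith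
    obtain ⟨K, hK⟩ := Metric.cauchySeq_iff.mp haCauchy (ε / (B.N * B.bnorm s + 1))
      (div_pos hε hCst1)
    refine ⟨K, fun k l hk hl => ?_⟩
    have main : ∀ k l : ℕ, K ≤ k → K ≤ l → l ≤ k →
        B.bnorm ((fun n : ℤ => ∑ m ∈ Finset.range k, gAux s lam n m) -
          (fun n : ℤ => ∑ m ∈ Finset.range l, gAux s lam n m)) < ε := by
      intro k l hk hl hlk
      rw [hdiff k l hlk]
      have hb := (hFin (Finset.Ico l k)).2
      have hd := hK k hk l hl
      rw [Real.dist_eq] at hd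
      have heq : ∑ m ∈ Finset.Ico l k, lam ^ (m + 1) =
          (∑ m ∈ Finset.range k, lam ^ (m + 1)) - ∑ m ∈ Finset.range l, lam ^ (m + 1) :=
        Finset.sum_Ico_eq_sub _ hlk
      have hle : ∑ m ∈ Finset.Ico l k, lam ^ (m + 1) < ε / (B.N * B.bnorm s + 1) := by
        rw [heq]
        calc (∑ m ∈ Finset.range k, lam ^ (m + 1)) - ∑ m ∈ Finset.range l, lam ^ (m + 1)
            ≤ |(∑ m ∈ Finset.range k, lam ^ (m + 1)) - ∑ m ∈ Finset.range l, lam ^ (m + 1)| :=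
              le_abs_self _
          _ < ε / (B.N * B.bnorm s + 1) := hd
      have hfinal : (B.N * B.bnorm s) * (ε / (B.N * B.bnorm s + 1)) < ε := by
        rw [mul_div_assoc', div_lt_iff₀ hCst1]
        nlinarith
      calc B.bnorm (fun n : ℤ => ∑ m ∈ Finset.Ico l k, gAux s lam n m)
          ≤ (B.N * B.bnorm s) * ∑ m ∈ Finset.Ico l k, lam ^ (m + 1) := hb
        _ ≤ (B.N * B.bnorm s) * (ε / (B.N * B.bnorm s + 1)) :=
            mul_le_mul_of_nonneg_left hle.le Cst_nonneg
        _ < ε := hfinal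
    rcases le_total l k with hlk | hkl
    · exact main k l hk hl hlk
    · have h := main l k hl hk hkl
      have : (fun n : ℤ => ∑ m ∈ Finset.range k, gAux s lam n m) -
          (fun n : ℤ => ∑ m ∈ Finset.range l, gAux s lam n m) =
        -((fun n : ℤ => ∑ m ∈ Finset.range l, gAux s lam n m) -
          (fun n : ℤ => ∑ m ∈ Finset.range k, gAux s lam n m)) := by
        funext n; simp
      rw [this, hneg]
      exact h
  -- apply completeness
  obtain ⟨t, htmem, hconv⟩ := B.complete
    (fun K => fun n : ℤ => ∑ m ∈ Finset.range K, gAux s lam n m)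
    (fun K => (hFin (Finset.range K)).1) hCauchy
  -- pointwise convergence of partial sums to t
  have hptwise : ∀ n : ℤ, Filter.Tendsto (fun K : ℕ => ∑ m ∈ Finset.range K, gAux s lam n m)
      Filter.atTop (nhds (t n)) := by
    intro n
    rw [Metric.tendsto_atTop]
    intro ε hε
    obtain ⟨K, hK⟩ := hconv (c * ε / B.N) (div_pos (mul_pos hc hε) B.N_pos)
    refine ⟨K, fun k hk => ?_⟩
    have hmemD := hsubmem (hFin (Finset.range k)).1 htmem
    have h1' := key _ hmemD n
    simp only [Pi.sub_apply] at h1'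
    have h2' := hK k hk
    rw [Real.dist_eq]
    have h4 : B.N * (c * ε / B.N) = c * ε := by
      rw [mul_div_assoc']
      exact mul_div_cancel_left₀ _ B.N_pos.ne'
    have h5 : B.N * B.bnorm ((fun n : ℤ => ∑ m ∈ Finset.range k, gAux s lam n m) - t) <
        c * ε := by
      rw [← h4]
      exact mul_lt_mul_of_pos_left h2' B.N_pos
    have h6 : c * |(∑ m ∈ Finset.range k, gAux s lam n m) - t n| < c * ε := lt_of_le_of_lt h1' h5
    exact lt_of_mul_lt_mul_left h6 hc.le
  -- identify t
  have ht_eq : (fun n : ℤ => ∑' m : ℕ, gAux s lam n m) = t := by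
    funext n
    exact tendsto_nhds_unique ((hsum n).tendsto_sum_nat) (hptwise n)
  refine ⟨by rw [ht_eq]; exact htmem, ?_⟩
  rw [ht_eq]
  apply le_of_forall_pos_le_add
  intro ε hε
  obtain ⟨K, hK⟩ := hconv ε hε
  have hmemD := hsubmem (hFin (Finset.range K)).1 htmem
  have hmemN : B.mem (-((fun n : ℤ => ∑ m ∈ Finset.range K, gAux s lam n m) - t)) := by
    have h := B.smul_mem (-1) hmemD
    simpa using h
  have heq : t = (fun n : ℤ => ∑ m ∈ Finset.range K, gAux s lam n m) +
      (-((fun n : ℤ => ∑ m ∈ Finset.range K, gAux s lam n m) - t)) := by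
    funext n; simp
  have haK : ∑ m ∈ Finset.range K, lam ^ (m + 1) ≤ lam * (1 - lam)⁻¹ :=
    sum_le_hasSum _ (fun m _ => (pow_pos h0 _).le) hT
  calc B.bnorm t
      = B.bnorm ((fun n : ℤ => ∑ m ∈ Finset.range K, gAux s lam n m) +
        (-((fun n : ℤ => ∑ m ∈ Finset.range K, gAux s lam n m) - t))) := by rw [← heq]
    _ ≤ B.bnorm (fun n : ℤ => ∑ m ∈ Finset.range K, gAux s lam n m) +
        B.bnorm (-((fun n : ℤ => ∑ m ∈ Finset.range K, gAux s lam n m) - t)) :=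
          B.bnorm_add_le (hFin (Finset.range K)).1 hmemN
    _ ≤ (B.N * B.bnorm s) * (lam * (1 - lam)⁻¹) + ε := by
        rw [hneg]
        have hb := (hFin (Finset.range K)).2
        have hd := hK K le_rfl
        have := mul_le_mul_of_nonneg_left haK Cst_nonneg
        linarith
    _ = (B.N * lam / (1 - lam)) * B.bnorm s + ε := by ring
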